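/- arXiv:1509.07639 — 3 statements merged into one kernel-verified Lean document; each statement's English description precedes it below -/
import Mathlib

section
/- The set of permutations g of ℕ^k × [n] for which there exists a finite partition of ℕ^k × [n] into rays such that g restricted to each ray of the partition is a translation forms a subgroup of the symmetric group of ℕ^k × [n]: it contains the identity and is closed under composition and inversion. -/
open CategoryTheory

/-- Points of `ℕ^k × [n]`, where `ℕ^k` is modelled by `Fin k → ℕ` and `[n]` by `Fin n`. -/
abbrev HPt (k n : ℕ) := (Fin k → ℕ) × Fin n

/-- `X ⊆ ℕ^k` is an `r`-dimensional ray: there are a point `x ∈ ℕ^k` and an `r`-element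
subset `T ⊆ [k]` such that `X = {y | y j ≥ x j for j ∈ T, y j = x j for j ∉ T}`. -/
def IsRayOfDim (k r : ℕ) (X : Set (Fin k → ℕ)) : Prop :=
  ∃ (x : Fin k → ℕ) (T : Finset (Fin k)), T.card = r ∧
    X = {y | ∀ j, (j ∈ T → x j ≤ y j) ∧ (j ∉ T → y j = x j)}

/-- `X ⊆ ℕ^k` is a ray. -/
def IsRay (k : ℕ) (X : Set (Fin k → ℕ)) : Prop := ∃ r, IsRayOfDim k r X

/-- A ray in `ℕ^k × [n]`: a set `Y × {i}` with `Y` a ray in `ℕ^k` and `i ∈ [n]`. -/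
def IsRayIn (k n : ℕ) (X : Set (HPt k n)) : Prop :=
  ∃ (Y : Set (Fin k → ℕ)) (i : Fin n), IsRay k Y ∧ X = {p | p.1 ∈ Y ∧ p.2 = i}

/-- An `r`-dimensional ray in `ℕ^k × [n]`. -/
def IsRayInOfDim (k n r : ℕ) (X : Set (HPt k n)) : Prop :=
  ∃ (Y : Set (Fin k → ℕ)) (i : Fin n), IsRayOfDim k r Y ∧ X = {p | p.1 ∈ Y ∧ p.2 = i}

/-- The restriction of `f` to `A` is a translation: there are `d ∈ ℤ^k` and `d₀ ∈ ℤ`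
such that `f (x, i) = (x + d, i + d₀)` for all `(x, i) ∈ A`. -/
def IsTranslationOn (k n n' : ℕ) (f : HPt k n → HPt k n') (A : Set (HPt k n)) : Prop :=
  ∃ (d : Fin k → ℤ) (d₀ : ℤ), ∀ p ∈ A,
    (∀ j, ((f p).1 j : ℤ) = (p.1 j : ℤ) + d j) ∧ (((f p).2 : ℤ) = (p.2 : ℤ) + d₀)

/-- `P` is a finite partition of `A ⊆ ℕ^k × [n]` into rays. -/
def IsRayPartitionOf (k n : ℕ) (P : Set (Set (HPt k n))) (A : Set (HPt k n)) : Prop :=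
  P.Finite ∧ (∀ X ∈ P, IsRayIn k n X) ∧ ⋃₀ P = A ∧
    ∀ X ∈ P, ∀ Y ∈ P, X ≠ Y → Disjoint X Y

/-- `g` admits a finite partition of `ℕ^k × [n]` into rays on each of which it is a
translation. -/
def IsPiecewiseTranslation (k n : ℕ) (g : HPt k n → HPt k n) : Prop :=
  ∃ P, IsRayPartitionOf k n P Set.univ ∧ ∀ X ∈ P, IsTranslationOn k n n g X

lemma fin_eq_of_cast {n : ℕ} {a b : Fin n} (h : (a : ℤ) = (b : ℤ)) : a = b := by
  have : (a : ℕ) = (b : ℕ) := by exact_mod_cast h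
  exact Fin.val_injective this

lemma ray_mem_base {k : ℕ} (x : Fin k → ℕ) (T : Finset (Fin k)) :
    x ∈ {y : Fin k → ℕ | ∀ j, (j ∈ T → x j ≤ y j) ∧ (j ∉ T → y j = x j)} :=
  fun j => ⟨fun _ => le_refl _, fun _ => rfl⟩

lemma isRay_of_conds {k : ℕ} (S : Fin k → Set ℕ)
    (hS : ∀ j, (∃ a, S j = Set.Ici a) ∨ (∃ a, S j = {a})) :
    IsRay k {y | ∀ j, y j ∈ S j} := by
  classical
  have h' : ∀ j, ∃ a, S j = Set.Ici a ∨ S j = {a} := by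
    intro j
    rcases hS j with ⟨a, ha⟩ | ⟨a, ha⟩
    exacts [⟨a, Or.inl ha⟩, ⟨a, Or.inr ha⟩]
  choose x hx using h'
  set T : Finset (Fin k) := Finset.univ.filter (fun j => S j = Set.Ici (x j)) with hT
  refine ⟨T.card, x, T, rfl, ?_⟩
  ext y
  simp only [Set.mem_setOf_eq]
  constructor
  · intro h j
    constructor
    · intro hj
      have hS' : S j = Set.Ici (x j) := by simpa [hT] using hj
      have := h j
      rw [hS'] at this
      exact this
    · intro hj
      have hS' : S j = {x j} := by
        rcases hx j with h1 | h1
        · exact absurd (by simp [hT, h1]) hj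
        · exact h1
      have := h j
      rw [hS'] at this
      exact this
  · intro h j
    rcases hx j with h1 | h1
    · have hjT : j ∈ T := by simp [hT, h1]
      rw [h1]
      exact (h j).1 hjT
    · by_cases hjT : j ∈ T
      · have hS' : S j = Set.Ici (x j) := by simpa [hT] using hjT
        rw [hS']
        exact (h j).1 hjT
      · rw [h1]
        exact (h j).2 hjT

lemma conds_empty_or_ray {k : ℕ} (S : Fin k → Set ℕ)
    (hS : ∀ j, (∃ a, S j = Set.Ici a) ∨ (∃ a, S j = {a}) ∨ S j = ∅) :
    {y : Fin k → ℕ | ∀ j, y j ∈ S j} = ∅ ∨ IsRay k {y | ∀ j, y j ∈ S j} := by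
  by_cases h : ∀ j, (∃ a, S j = Set.Ici a) ∨ (∃ a, S j = {a})
  · exact Or.inr (isRay_of_conds S h)
  · left
    push_neg at h
    obtain ⟨j, hj1, hj2⟩ := h
    have hj : S j = ∅ := by
      rcases hS j with ⟨a, h1⟩ | ⟨a, h1⟩ | h1
      · exact absurd h1 (hj1 a)
      · exact absurd h1 (hj2 a)
      · exact h1
    ext y
    simp only [Set.mem_setOf_eq, Set.mem_empty_iff_false, iff_false]
    intro hy
    have := hy j
    rw [hj] at this
    exact this

lemma combine_ray {k : ℕ} (x x' : Fin k → ℕ) (T T' : Finset (Fin k)) (d : Fin k → ℤ) :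
    {y : Fin k → ℕ | (∀ j, (j ∈ T → x j ≤ y j) ∧ (j ∉ T → y j = x j)) ∧
      (∀ j, (j ∈ T' → (x' j : ℤ) ≤ (y j : ℤ) + d j) ∧
        (j ∉ T' → (y j : ℤ) + d j = (x' j : ℤ)))} = ∅ ∨
    IsRay k {y : Fin k → ℕ | (∀ j, (j ∈ T → x j ≤ y j) ∧ (j ∉ T → y j = x j)) ∧
      (∀ j, (j ∈ T' → (x' j : ℤ) ≤ (y j : ℤ) + d j) ∧
        (j ∉ T' → (y j : ℤ) + d j = (x' j : ℤ)))} := by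
  classical
  set S : Fin k → Set ℕ := fun j => {m : ℕ | (j ∈ T → x j ≤ m) ∧ (j ∉ T → m = x j) ∧
    (j ∈ T' → (x' j : ℤ) ≤ (m : ℤ) + d j) ∧ (j ∉ T' → (m : ℤ) + d j = (x' j : ℤ))} with hSdef
  have hset : {y : Fin k → ℕ | (∀ j, (j ∈ T → x j ≤ y j) ∧ (j ∉ T → y j = x j)) ∧
      (∀ j, (j ∈ T' → (x' j : ℤ) ≤ (y j : ℤ) + d j) ∧
        (j ∉ T' → (y j : ℤ) + d j = (x' j : ℤ)))} = {y | ∀ j, y j ∈ S j} := by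
    ext y
    simp only [Set.mem_setOf_eq, hSdef]
    constructor
    · intro ⟨h1, h2⟩ j
      exact ⟨(h1 j).1, (h1 j).2, (h2 j).1, (h2 j).2⟩
    · intro h
      exact ⟨fun j => ⟨(h j).1, (h j).2.1⟩, fun j => ⟨(h j).2.2.1, (h j).2.2.2⟩⟩
  rw [hset]
  apply conds_empty_or_ray
  intro j
  by_cases hT : j ∈ T <;> by_cases hT' : j ∈ T'
  · left
    refine ⟨max (x j) ((x' j - d j).toNat), ?_⟩
    ext m
    simp only [hSdef, Set.mem_setOf_eq, Set.mem_Ici, eq_true hT, eq_true hT',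
      true_implies, not_true, false_implies, true_and, and_true]
    omega
  · by_cases hc : (x j : ℤ) ≤ x' j - d j
    · right; left
      refine ⟨(x' j - d j).toNat, ?_⟩
      ext m
      simp only [hSdef, Set.mem_setOf_eq, eq_true hT, eq_false hT',
        true_implies, false_implies, not_true, not_false_eq_true, true_and, and_true,
        Set.mem_singleton_iff]
      omega
    · right; right
      ext m
      simp only [hSdef, Set.mem_setOf_eq, eq_true hT, eq_false hT',
        true_implies, false_implies, not_true, not_false_eq_true, true_and, and_true,
        Set.mem_empty_iff_false, iff_false]
      omega
  · by_cases hc : (x' j : ℤ) ≤ (x j : ℤ) + d j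
    · right; left
      refine ⟨x j, ?_⟩
      ext m
      simp only [hSdef, Set.mem_setOf_eq, eq_false hT, eq_true hT',
        true_implies, false_implies, not_true, not_false_eq_true, true_and, and_true,
        Set.mem_singleton_iff]
      omega
    · right; right
      ext m
      simp only [hSdef, Set.mem_setOf_eq, eq_false hT, eq_true hT',
        true_implies, false_implies, not_true, not_false_eq_true, true_and, and_true,
        Set.mem_empty_iff_false, iff_false]
      omega
  · by_cases hc : (x j : ℤ) + d j = (x' j : ℤ)
    · right; left
      refine ⟨x j, ?_⟩
      ext m
      simp only [hSdef, Set.mem_setOf_eq, eq_false hT, eq_false hT',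
        true_implies, false_implies, not_true, not_false_eq_true, true_and, and_true,
        Set.mem_singleton_iff]
      omega
    · right; right
      ext m
      simp only [hSdef, Set.mem_setOf_eq, eq_false hT, eq_false hT',
        true_implies, false_implies, not_true, not_false_eq_true, true_and, and_true,
        Set.mem_empty_iff_false, iff_false]
      omega

lemma image_translation {k n : ℕ} (g : Equiv.Perm (HPt k n)) {X : Set (HPt k n)}
    (hX : IsRayIn k n X) (ht : IsTranslationOn k n n ⇑g X) :
    IsRayIn k n (⇑g '' X) ∧ IsTranslationOn k n n ⇑g⁻¹ (⇑g '' X) := by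
  obtain ⟨W, i, ⟨r, x, T, hcard, rfl⟩, rfl⟩ := hX
  obtain ⟨d, d₀, hd⟩ := ht
  have hbase : ((x, i) : HPt k n) ∈ {p : HPt k n | p.1 ∈
      {y | ∀ j, (j ∈ T → x j ≤ y j) ∧ (j ∉ T → y j = x j)} ∧ p.2 = i} :=
    ⟨ray_mem_base x T, rfl⟩
  set e : HPt k n := g (x, i) with he_def
  obtain ⟨he1, he2⟩ := hd (x, i) hbase
  rw [← he_def] at he1 he2
  dsimp only at he1 he2
  constructor
  · refine ⟨{y | ∀ j, (j ∈ T → e.1 j ≤ y j) ∧ (j ∉ T → y j = e.1 j)}, e.2,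
      ⟨T.card, e.1, T, rfl, rfl⟩, ?_⟩
    ext p
    simp only [Set.mem_image, Set.mem_setOf_eq]
    constructor
    · rintro ⟨q, ⟨hq1, hq2⟩, rfl⟩
      obtain ⟨hgq1, hgq2⟩ := hd q ⟨hq1, hq2⟩
      refine ⟨fun j => ⟨fun hj => ?_, fun hj => ?_⟩, ?_⟩
      · have h1 := (hq1 j).1 hj
        have h2 := hgq1 j
        have h3 := he1 j
        omega
      · have h1 := (hq1 j).2 hj
        have h2 := hgq1 j
        have h3 := he1 j
        omega
      · apply fin_eq_of_cast
        rw [hgq2, he2, hq2]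
    · rintro ⟨hp1, hp2⟩
      set q1 : Fin k → ℕ := fun j => ((p.1 j : ℤ) - d j).toNat with hq1def
      have hq1 : ∀ j, (q1 j : ℤ) = (p.1 j : ℤ) - d j := by
        intro j
        by_cases hj : j ∈ T
        · have h1 := (hp1 j).1 hj
          have h3 := he1 j
          simp only [hq1def]
          omega
        · have h1 := (hp1 j).2 hj
          have h3 := he1 j
          simp only [hq1def]
          omega
      have hqX : ((q1, i) : HPt k n) ∈ {p : HPt k n | p.1 ∈
          {y | ∀ j, (j ∈ T → x j ≤ y j) ∧ (j ∉ T → y j = x j)} ∧ p.2 = i} := by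
        refine ⟨fun j => ⟨fun hj => ?_, fun hj => ?_⟩, rfl⟩
        · have h1 := (hp1 j).1 hj
          have h3 := he1 j
          have h4 := hq1 j
          dsimp only
          omega
        · have h1 := (hp1 j).2 hj
          have h3 := he1 j
          have h4 := hq1 j
          dsimp only
          omega
      refine ⟨(q1, i), hqX, ?_⟩
      obtain ⟨hgq1, hgq2⟩ := hd (q1, i) hqX
      dsimp only at hgq1 hgq2
      have h1 : (g (q1, i)).1 = p.1 := by
        funext j
        have h2 := hgq1 j
        have h4 := hq1 j
        have : ((g (q1, i)).1 j : ℤ) = (p.1 j : ℤ) := by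
          rw [h2]; omega
        exact_mod_cast this
      have h2 : (g (q1, i)).2 = p.2 := by
        apply fin_eq_of_cast
        rw [hgq2, hp2, ← he2]
      exact Prod.ext h1 h2
  · refine ⟨fun j => -d j, -d₀, ?_⟩
    rintro p ⟨q, hq, rfl⟩
    obtain ⟨hgq1, hgq2⟩ := hd q hq
    rw [Equiv.Perm.inv_def, Equiv.symm_apply_apply]
    constructor
    · intro j
      have := hgq1 j
      simp only
      omega
    · rw [hgq2]; ring

lemma piece_lemma {k n : ℕ} (g h : Equiv.Perm (HPt k n)) {X Y : Set (HPt k n)}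
    (hX : IsRayIn k n X) (hY : IsRayIn k n Y)
    (hth : IsTranslationOn k n n ⇑h X) (htg : IsTranslationOn k n n ⇑g Y) :
    (X ∩ ⇑h ⁻¹' Y = ∅ ∨ IsRayIn k n (X ∩ ⇑h ⁻¹' Y)) ∧
      IsTranslationOn k n n ⇑(g * h) (X ∩ ⇑h ⁻¹' Y) := by
  obtain ⟨WX, iX, ⟨rX, x, T, -, rfl⟩, rfl⟩ := hX
  obtain ⟨WY, iY, ⟨rY, x', T', -, rfl⟩, rfl⟩ := hY
  obtain ⟨d, d₀, hd⟩ := hth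
  obtain ⟨e, e₀, he⟩ := htg
  constructor
  · by_cases hc : (iX : ℤ) + d₀ = (iY : ℤ)
    · have hseteq : {p : HPt k n | p.1 ∈ {y | ∀ j, (j ∈ T → x j ≤ y j) ∧ (j ∉ T → y j = x j)}
          ∧ p.2 = iX} ∩ ⇑h ⁻¹' {p : HPt k n | p.1 ∈
            {y | ∀ j, (j ∈ T' → x' j ≤ y j) ∧ (j ∉ T' → y j = x' j)} ∧ p.2 = iY}
          = {p : HPt k n | p.1 ∈ {y : Fin k → ℕ |
              (∀ j, (j ∈ T → x j ≤ y j) ∧ (j ∉ T → y j = x j)) ∧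
              (∀ j, (j ∈ T' → (x' j : ℤ) ≤ (y j : ℤ) + d j) ∧
                (j ∉ T' → (y j : ℤ) + d j = (x' j : ℤ)))} ∧ p.2 = iX} := by
        ext p
        simp only [Set.mem_inter_iff, Set.mem_preimage, Set.mem_setOf_eq]
        constructor
        · rintro ⟨⟨hp1, hp2⟩, hq1, hq2⟩
          obtain ⟨h1, h2⟩ := hd p ⟨hp1, hp2⟩
          refine ⟨⟨hp1, fun j => ⟨fun hj => ?_, fun hj => ?_⟩⟩, hp2⟩
          · have h3 := (hq1 j).1 hj
            have h4 := h1 j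
            omega
          · have h3 := (hq1 j).2 hj
            have h4 := h1 j
            omega
        · rintro ⟨⟨hp1, hp2⟩, hp3⟩
          obtain ⟨h1, h2⟩ := hd p ⟨hp1, hp3⟩
          refine ⟨⟨hp1, hp3⟩, fun j => ⟨fun hj => ?_, fun hj => ?_⟩, ?_⟩
          · have h3 := (hp2 j).1 hj
            have h4 := h1 j
            omega
          · have h3 := (hp2 j).2 hj
            have h4 := h1 j
            omega
          · apply fin_eq_of_cast
            rw [h2, hp3, hc]
      rw [hseteq]
      rcases combine_ray x x' T T' d with hW | hW
      · left
        ext p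
        simp only [Set.mem_setOf_eq, hW, Set.mem_empty_iff_false, false_and]
      · right
        exact ⟨_, iX, hW, rfl⟩
    · left
      ext p
      simp only [Set.mem_inter_iff, Set.mem_preimage, Set.mem_setOf_eq,
        Set.mem_empty_iff_false, iff_false, not_and]
      intro ⟨hp1, hp2⟩ hq1 hq2
      obtain ⟨h1, h2⟩ := hd p ⟨hp1, hp2⟩
      apply hc
      rw [← hp2, ← h2, hq2]
  · refine ⟨fun j => d j + e j, d₀ + e₀, ?_⟩
    rintro p ⟨hpX, hpY⟩
    obtain ⟨h1, h2⟩ := hd p hpX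
    obtain ⟨h3, h4⟩ := he (h p) hpY
    constructor
    · intro j
      have h5 := h1 j
      have h6 := h3 j
      simp only [Equiv.Perm.mul_apply]
      omega
    · simp only [Equiv.Perm.mul_apply]
      omega

/-- The set of permutations of `ℕ^k × [n]` that are translations on each ray of some
finite partition into rays contains the identity and is closed under composition and
inversion, hence forms a subgroup of the symmetric group of `ℕ^k × [n]`. -/
theorem piecewiseTranslations_form_subgroup (k n : ℕ) (hk : 1 ≤ k) :
    IsPiecewiseTranslation k n ⇑(1 : Equiv.Perm (HPt k n)) ∧
    (∀ g h : Equiv.Perm (HPt k n), IsPiecewiseTranslation k n ⇑g →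
      IsPiecewiseTranslation k n ⇑h → IsPiecewiseTranslation k n ⇑(g * h)) ∧
    (∀ g : Equiv.Perm (HPt k n), IsPiecewiseTranslation k n ⇑g →
      IsPiecewiseTranslation k n ⇑g⁻¹) := by
  refine ⟨?_, ?_, ?_⟩
  · -- identity
    refine ⟨Set.range (fun i : Fin n => {p : HPt k n | p.2 = i}),
      ⟨Set.finite_range _, ?_, ?_, ?_⟩, ?_⟩
    · rintro X ⟨i, rfl⟩
      refine ⟨{y | ∀ j, (j ∈ (Finset.univ : Finset (Fin k)) → (0 : Fin k → ℕ) j ≤ y j) ∧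
        (j ∉ (Finset.univ : Finset (Fin k)) → y j = (0 : Fin k → ℕ) j)}, i,
        ⟨Finset.univ.card, 0, Finset.univ, rfl, rfl⟩, ?_⟩
      ext p
      simp only [Set.mem_setOf_eq, Finset.mem_univ, forall_const, not_true_eq_false,
        IsEmpty.forall_iff, and_true, true_implies, Pi.zero_apply, Nat.zero_le,
        implies_true, true_and]
    · ext p
      simp only [Set.mem_sUnion, Set.mem_range, exists_exists_eq_and, Set.mem_setOf_eq,
        Set.mem_univ, iff_true]
      exact ⟨p.2, rfl⟩
    · rintro X ⟨i, rfl⟩ Y ⟨i', rfl⟩ hne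
      rw [Set.disjoint_left]
      intro p hp hp'
      exact hne (by rw [show i = i' from hp ▸ hp'])
    · rintro X ⟨i, rfl⟩
      refine ⟨0, 0, fun p _ => ?_⟩
      simp [Equiv.Perm.coe_one]
  · -- composition
    rintro g h ⟨P, ⟨hPfin, hPray, hPun, hPdis⟩, hPtr⟩ ⟨Q, ⟨hQfin, hQray, hQun, hQdis⟩, hQtr⟩
    refine ⟨{Z | Z.Nonempty ∧ ∃ X ∈ Q, ∃ Y ∈ P, Z = X ∩ ⇑h ⁻¹' Y}, ⟨?_, ?_, ?_, ?_⟩, ?_⟩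
    · apply Set.Finite.subset ((hQfin.prod hPfin).image
        (fun q : Set (HPt k n) × Set (HPt k n) => q.1 ∩ ⇑h ⁻¹' q.2))
      rintro Z ⟨-, X, hXQ, Y, hYP, rfl⟩
      exact ⟨(X, Y), ⟨hXQ, hYP⟩, rfl⟩
    · rintro Z ⟨hne, X, hXQ, Y, hYP, rfl⟩
      rcases (piece_lemma g h (hQray X hXQ) (hPray Y hYP) (hQtr X hXQ) (hPtr Y hYP)).1
        with h0 | h0
      · exact absurd h0 hne.ne_empty
      · exact h0
    · ext p
      simp only [Set.mem_sUnion, Set.mem_setOf_eq, Set.mem_univ, iff_true]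
      have hp : p ∈ ⋃₀ Q := by rw [hQun]; trivial
      obtain ⟨X, hXQ, hpX⟩ := hp
      have hp' : h p ∈ ⋃₀ P := by rw [hPun]; trivial
      obtain ⟨Y, hYP, hpY⟩ := hp'
      exact ⟨X ∩ ⇑h ⁻¹' Y, ⟨⟨p, hpX, hpY⟩, X, hXQ, Y, hYP, rfl⟩, hpX, hpY⟩
    · rintro Z ⟨-, X, hXQ, Y, hYP, rfl⟩ Z' ⟨-, X', hXQ', Y', hYP', rfl⟩ hne
      rw [Set.disjoint_left]
      intro p hp hp'
      have hXX : X = X' := by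
        by_contra hxx
        exact (hQdis X hXQ X' hXQ' hxx).le_bot ⟨hp.1, hp'.1⟩
      have hYY : Y = Y' := by
        by_contra hyy
        exact (hPdis Y hYP Y' hYP' hyy).le_bot ⟨hp.2, hp'.2⟩
      exact hne (by rw [hXX, hYY])
    · rintro Z ⟨-, X, hXQ, Y, hYP, rfl⟩
      exact (piece_lemma g h (hQray X hXQ) (hPray Y hYP) (hQtr X hXQ) (hPtr Y hYP)).2
  · -- inverse
    rintro g ⟨P, ⟨hPfin, hPray, hPun, hPdis⟩, hPtr⟩
    refine ⟨(fun X => ⇑g '' X) '' P, ⟨hPfin.image _, ?_, ?_, ?_⟩, ?_⟩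
    · rintro Z ⟨X, hXP, rfl⟩
      exact (image_translation g (hPray X hXP) (hPtr X hXP)).1
    · ext p
      simp only [Set.mem_sUnion, Set.mem_image, Set.mem_univ, iff_true]
      have hp : (⇑g⁻¹ p : HPt k n) ∈ ⋃₀ P := by rw [hPun]; trivial
      obtain ⟨X, hXP, hq⟩ := hp
      exact ⟨⇑g '' X, ⟨X, hXP, rfl⟩, ⟨g⁻¹ p, hq, g.apply_symm_apply p⟩⟩
    · rintro Z ⟨X, hXP, rfl⟩ Z' ⟨X', hXP', rfl⟩ hne
      have hxx : X ≠ X' := by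
        rintro rfl
        exact hne rfl
      exact (Set.disjoint_image_iff g.injective).2 (hPdis X hXP X' hXP' hxx)
    · rintro Z ⟨X, hXP, rfl⟩
      exact (image_translation g (hPray X hXP) (hPtr X hXP)).2
end

section
/- Every finite partition P of ℕ^k × [n] into rays contains exactly n rays of dimension k; more precisely, for each i ∈ [n] there is exactly one k-dimensional ray of P contained in ℕ^k × {i}, and every k-dimensional ray of P is contained in ℕ^k × {i} for some i. -/
open CategoryTheory

lemma rayOfDim_nonempty {k r : ℕ} {Y : Set (Fin k → ℕ)} (h : IsRayOfDim k r Y) : Y.Nonempty := by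
  obtain ⟨x, T, -, rfl⟩ := h
  exact ⟨x, fun j => ⟨fun _ => le_refl _, fun _ => rfl⟩⟩

lemma topRay_eq {k : ℕ} {Y : Set (Fin k → ℕ)} (h : IsRayOfDim k k Y) :
    ∃ x : Fin k → ℕ, Y = {y | ∀ j, x j ≤ y j} := by
  obtain ⟨x, T, hT, rfl⟩ := h
  have hT' : T = Finset.univ := Finset.eq_univ_of_card T (by rw [hT, Fintype.card_fin])
  subst hT'
  exact ⟨x, by ext y; simp⟩

/-- Every finite partition of `ℕ^k × [n]` into rays contains exactly `n` rays of
dimension `k`: for each `i ∈ [n]` exactly one `k`-dimensional ray of the partition is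
contained in `ℕ^k × {i}`, and every `k`-dimensional ray of the partition is contained in
some `ℕ^k × {i}`. -/
theorem rayPartition_top_rays (k n : ℕ) (hk : 1 ≤ k) (P : Set (Set (HPt k n)))
    (hP : IsRayPartitionOf k n P Set.univ) :
    {X ∈ P | IsRayInOfDim k n k X}.ncard = n ∧
    (∀ i : Fin n, ∃! X, X ∈ P ∧ IsRayInOfDim k n k X ∧ X ⊆ {p : HPt k n | p.2 = i}) ∧
    (∀ X ∈ P, IsRayInOfDim k n k X → ∃ i : Fin n, X ⊆ {p : HPt k n | p.2 = i}) := by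

  obtain ⟨hfin, hray, hcover, hdisj⟩ := hP
  -- every member of `P` is nonempty
  have hne : ∀ X ∈ P, X.Nonempty := by
    intro X hX
    obtain ⟨Y, i, ⟨r, hY⟩, rfl⟩ := hray X hX
    obtain ⟨y, hy⟩ := rayOfDim_nonempty hY
    exact ⟨(y, i), hy, rfl⟩
  -- part 3
  have h3 : ∀ X ∈ P, IsRayInOfDim k n k X → ∃ i : Fin n, X ⊆ {p : HPt k n | p.2 = i} := by
    rintro X hX ⟨Y, i, hY, rfl⟩
    exact ⟨i, fun p hp => hp.2⟩
  -- any two top-dimensional members of `P` inside the same slice are equal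
  have key : ∀ i : Fin n, ∀ X1 ∈ P, ∀ X2 ∈ P, IsRayInOfDim k n k X1 → IsRayInOfDim k n k X2 →
      X1 ⊆ {p : HPt k n | p.2 = i} → X2 ⊆ {p : HPt k n | p.2 = i} → X1 = X2 := by
    rintro i X1 h1 X2 h2 ⟨Y1, i1, hY1, rfl⟩ ⟨Y2, i2, hY2, rfl⟩ hs1 hs2
    obtain ⟨x1, rfl⟩ := topRay_eq hY1
    obtain ⟨x2, rfl⟩ := topRay_eq hY2
    have hp1 : ((x1 ⊔ x2 : Fin k → ℕ), i1) ∈ {p : HPt k n | p.1 ∈ {y | ∀ j, x1 j ≤ y j} ∧ p.2 = i1} :=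
      ⟨fun j => le_sup_left, rfl⟩
    have hp2 : ((x1 ⊔ x2 : Fin k → ℕ), i2) ∈ {p : HPt k n | p.1 ∈ {y | ∀ j, x2 j ≤ y j} ∧ p.2 = i2} :=
      ⟨fun j => le_sup_right, rfl⟩
    have hi1 : i1 = i := hs1 hp1
    have hi2 : i2 = i := hs2 hp2
    subst hi1; subst hi2
    by_contra hne'
    exact Set.disjoint_left.mp (hdisj _ h1 _ h2 hne') hp1 hp2
  -- part 2
  have h2 : ∀ i : Fin n, ∃! X, X ∈ P ∧ IsRayInOfDim k n k X ∧ X ⊆ {p : HPt k n | p.2 = i} := by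
    intro i
    have hmem : ∀ m : ℕ, ∃ X : P, ((fun _ => m : Fin k → ℕ), i) ∈ (X : Set (HPt k n)) := by
      intro m
      have hm : ((fun _ => m : Fin k → ℕ), i) ∈ ⋃₀ P := by rw [hcover]; trivial
      obtain ⟨X, hX, hmm⟩ := hm
      exact ⟨⟨X, hX⟩, hmm⟩
    choose g hg using hmem
    haveI := hfin.to_subtype
    obtain ⟨m, m', hmm, heq⟩ := Finite.exists_ne_map_eq_of_infinite g
    obtain ⟨Y, i', ⟨r, x, T, hT, rfl⟩, hXeq⟩ := hray (g m : Set (HPt k n)) (g m).2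
    have hm1 : ((fun _ => m : Fin k → ℕ), i) ∈ (g m : Set (HPt k n)) := hg m
    have hm2 : ((fun _ => m' : Fin k → ℕ), i) ∈ (g m : Set (HPt k n)) := by
      rw [heq]; exact hg m'
    rw [hXeq] at hm1 hm2
    have hTuniv : T = Finset.univ := by
      rw [Finset.eq_univ_iff_forall]
      intro j
      by_contra hj
      have e1 : m = x j := (hm1.1 j).2 hj
      have e2 : m' = x j := (hm2.1 j).2 hj
      exact hmm (e1.trans e2.symm)
    have hii' : i = i' := hm1.2
    subst hii'
    have hdim : IsRayInOfDim k n k (g m : Set (HPt k n)) :=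
      ⟨_, i, ⟨x, T, by rw [hTuniv, Finset.card_univ, Fintype.card_fin], rfl⟩, hXeq⟩
    have hsub : (g m : Set (HPt k n)) ⊆ {p : HPt k n | p.2 = i} := by
      rw [hXeq]; exact fun p hp => hp.2
    refine ⟨(g m : Set (HPt k n)), ⟨(g m).2, hdim, hsub⟩, ?_⟩
    rintro Z ⟨hZP, hZdim, hZsub⟩
    exact key i Z hZP _ (g m).2 hZdim hdim hZsub hsub
  refine ⟨?_, h2, h3⟩
  -- part 1: count
  classical
  set F : Fin n → Set (HPt k n) := fun i => (h2 i).choose with hF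
  have hFspec : ∀ i, F i ∈ P ∧ IsRayInOfDim k n k (F i) ∧ F i ⊆ {p : HPt k n | p.2 = i} :=
    fun i => (h2 i).choose_spec.1
  have hFuniq : ∀ i, ∀ Z, (Z ∈ P ∧ IsRayInOfDim k n k Z ∧ Z ⊆ {p : HPt k n | p.2 = i}) → Z = F i :=
    fun i => (h2 i).choose_spec.2
  have hFinj : Function.Injective F := by
    intro i j hij
    obtain ⟨p, hp⟩ := hne (F i) (hFspec i).1
    have h1 : p.2 = i := (hFspec i).2.2 hp
    have h2' : p.2 = j := (hFspec j).2.2 (hij ▸ hp)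
    exact h1 ▸ h2'
  have hSeq : {X ∈ P | IsRayInOfDim k n k X} = Set.range F := by
    ext X
    constructor
    · rintro ⟨hXP, hXdim⟩
      obtain ⟨i, hXsub⟩ := h3 X hXP hXdim
      exact ⟨i, (hFuniq i X ⟨hXP, hXdim, hXsub⟩).symm⟩
    · rintro ⟨i, rfl⟩
      exact ⟨(hFspec i).1, (hFspec i).2.1⟩
  rw [hSeq, ← Set.image_univ, Set.ncard_image_of_injective _ hFinj, Set.ncard_univ,
    Nat.card_eq_fintype_card, Fintype.card_fin]
end

section
/- If m ≤ n and f : ℕ^k × [m] → ℕ^k × [n] is a ray-translation injection, then the complement (ℕ^k × [n]) \ f(ℕ^k × [m]) of its image admits a (possibly empty) finite partition into rays. -/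
open CategoryTheory

/-- A ray-translation injection `ℕ^k × [m] → ℕ^k × [n]`: an injection which is a
translation on every ray of some finite partition of `ℕ^k × [m]` into rays. -/
def IsRayTranslationInj (k m n : ℕ) (f : HPt k m → HPt k n) : Prop :=
  Function.Injective f ∧
    ∃ P, IsRayPartitionOf k m P Set.univ ∧ ∀ X ∈ P, IsTranslationOn k m n f X

section RayProof

-- standard ray notation
def stdRay {k : ℕ} (x : Fin k → ℕ) (T : Finset (Fin k)) : Set (Fin k → ℕ) :=
  {y | ∀ j, (j ∈ T → x j ≤ y j) ∧ (j ∉ T → y j = x j)}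

lemma isRay_stdRay {k} (x : Fin k → ℕ) (T : Finset (Fin k)) : IsRay k (stdRay x T) :=
  ⟨T.card, x, T, rfl, rfl⟩

lemma isRay_iff {k} (Y : Set (Fin k → ℕ)) : IsRay k Y ↔ ∃ x T, Y = stdRay x T := by
  constructor
  · rintro ⟨r, x, T, -, rfl⟩; exact ⟨x, T, rfl⟩
  · rintro ⟨x, T, rfl⟩; exact isRay_stdRay x T

lemma base_mem_stdRay {k} (x : Fin k → ℕ) (T : Finset (Fin k)) : x ∈ stdRay x T := by
  intro j; exact ⟨fun _ => le_refl _, fun _ => rfl⟩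

-- intersection of rays
lemma stdRay_inter {k} (x x' : Fin k → ℕ) (T T' : Finset (Fin k)) (w : Fin k → ℕ)
    (hw : w ∈ stdRay x T ∩ stdRay x' T') :
    stdRay x T ∩ stdRay x' T' = stdRay (fun j => max (x j) (x' j)) (T ∩ T') := by
  obtain ⟨hw1, hw2⟩ := hw
  ext y
  simp only [Set.mem_inter_iff, stdRay, Set.mem_setOf_eq, Finset.mem_inter]
  constructor
  · intro ⟨h1, h2⟩ j
    obtain ⟨a1, b1⟩ := h1 j; obtain ⟨a2, b2⟩ := h2 j
    obtain ⟨c1, d1⟩ := hw1 j; obtain ⟨c2, d2⟩ := hw2 j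
    by_cases ht : j ∈ T <;> by_cases ht' : j ∈ T' <;>
      constructor <;> simp_all <;> omega
  · intro h
    constructor <;> intro j <;>
    · obtain ⟨a, b⟩ := h j
      obtain ⟨c1, d1⟩ := hw1 j; obtain ⟨c2, d2⟩ := hw2 j
      by_cases ht : j ∈ T <;> by_cases ht' : j ∈ T' <;>
        constructor <;> simp_all <;> omega

-- cells: (a, true) = [a,∞), (a, false) = {a}
def cellMem (c : ℕ × Bool) (y : ℕ) : Prop := if c.2 then c.1 ≤ y else y = c.1

def raySetC {k : ℕ} (c : Fin k → ℕ × Bool) : Set (Fin k → ℕ) := {y | ∀ j, cellMem (c j) (y j)}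

lemma raySetC_eq_stdRay {k} (c : Fin k → ℕ × Bool) :
    raySetC c = stdRay (fun j => (c j).1) (Finset.univ.filter fun j => (c j).2) := by
  ext y
  simp only [raySetC, stdRay, Set.mem_setOf_eq, Finset.mem_filter, Finset.mem_univ, true_and]
  constructor
  · intro h j; have := h j; cases hc : (c j).2 <;> simp_all [cellMem]
  · intro h j; have := h j; cases hc : (c j).2 <;> simp_all [cellMem]

lemma isRay_raySetC {k} (c : Fin k → ℕ × Bool) : IsRay k (raySetC c) := by
  rw [raySetC_eq_stdRay]; exact isRay_stdRay _ _

lemma stdRay_eq_raySetC {k} (x : Fin k → ℕ) (T : Finset (Fin k)) :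
    stdRay x T = raySetC (fun j => (x j, j ∈ T)) := by
  ext y
  simp only [raySetC, stdRay, Set.mem_setOf_eq]
  constructor
  · intro h j; have := h j; by_cases ht : j ∈ T <;> simp_all [cellMem]
  · intro h j; have := h j; by_cases ht : j ∈ T <;> simp_all [cellMem]

-- violating cells
def violCells (c : ℕ × Bool) : Set (ℕ × Bool) :=
  {w | (w.2 = false ∧ w.1 < c.1) ∨ (c.2 = false ∧ w = (c.1 + 1, true))}

lemma violCells_finite (c : ℕ × Bool) : (violCells c).Finite := by
  apply Set.Finite.subset (Set.Finite.union
    ((Set.finite_Iio c.1).prod (Set.finite_singleton false))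
    (Set.finite_singleton (c.1 + 1, true)))
  rintro ⟨a, b⟩ h
  rcases h with ⟨h1, h2⟩ | ⟨h1, h2⟩
  · left; exact ⟨h2, h1⟩
  · right; exact h2

lemma violCells_not_cellMem {c w : ℕ × Bool} (hw : w ∈ violCells c) {y : ℕ}
    (hy : cellMem w y) : ¬ cellMem c y := by
  rcases hw with ⟨h1, h2⟩ | ⟨h1, h2⟩ <;> obtain ⟨a, b⟩ := c <;> obtain ⟨a', b'⟩ := w <;>
    simp_all [cellMem] <;> cases b <;> simp_all <;> omega

lemma exists_violCell {c : ℕ × Bool} {y : ℕ} (hy : ¬ cellMem c y) :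
    ∃ w ∈ violCells c, cellMem w y := by
  obtain ⟨a, b⟩ := c
  by_cases hlt : y < a
  · exact ⟨(y, false), Or.inl ⟨rfl, hlt⟩, by simp [cellMem]⟩
  · cases b
    · refine ⟨(a + 1, true), Or.inr ⟨rfl, rfl⟩, ?_⟩
      simp_all [cellMem]; omega
    · simp_all [cellMem]
    
lemma violCells_disjoint {c w w' : ℕ × Bool} (hw : w ∈ violCells c) (hw' : w' ∈ violCells c)
    (hne : w ≠ w') {y : ℕ} (hy : cellMem w y) (hy' : cellMem w' y) : False := by
  rcases hw with ⟨h1, h2⟩ | ⟨h1, h2⟩ <;> rcases hw' with ⟨g1, g2⟩ | ⟨g1, g2⟩ <;>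
    obtain ⟨a', b'⟩ := w <;> obtain ⟨a'', b''⟩ := w' <;> simp_all [cellMem] <;> omega

def pieceC {k : ℕ} (c : Fin k → ℕ × Bool) (j : Fin k) (w : ℕ × Bool) : Fin k → ℕ × Bool :=
  fun i => if i < j then c i else if i = j then w else (0, true)

lemma mem_pieceC {k} (c : Fin k → ℕ × Bool) (j : Fin k) (w : ℕ × Bool) (y : Fin k → ℕ) :
    y ∈ raySetC (pieceC c j w) ↔ (∀ i, i < j → cellMem (c i) (y i)) ∧ cellMem w (y j) := by
  constructor
  · intro h
    refine ⟨fun i hi => ?_, ?_⟩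
    · have := h i; simp only [pieceC, if_pos hi] at this; exact this
    · have := h j; simp only [pieceC, lt_irrefl, if_neg (lt_irrefl j), if_pos rfl] at this
      exact this
  · rintro ⟨h1, h2⟩ i
    simp only [pieceC]
    split
    · exact h1 i ‹_›
    · split
      · subst ‹i = j›; exact h2
      · simp [cellMem]

/-- `GoodK B`: B is a finite disjoint union of rays in ℕ^k. -/
def GoodK (k : ℕ) (B : Set (Fin k → ℕ)) : Prop :=
  ∃ P : Set (Set (Fin k → ℕ)), P.Finite ∧ (∀ X ∈ P, IsRay k X) ∧ ⋃₀ P = B ∧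
    ∀ X ∈ P, ∀ Y ∈ P, X ≠ Y → Disjoint X Y

lemma goodK_compl_raySetC {k} (c : Fin k → ℕ × Bool) : GoodK k (raySetC c)ᶜ := by
  classical
  set S : Set (Fin k × (ℕ × Bool)) := {q | q.2 ∈ violCells (c q.1)} with hS
  refine ⟨(fun q : Fin k × (ℕ × Bool) => raySetC (pieceC c q.1 q.2)) '' S, ?_, ?_, ?_, ?_⟩
  · apply Set.Finite.image
    apply Set.Finite.subset (Set.Finite.biUnion (Set.finite_univ (α := Fin k))
      (fun j _ => (Set.finite_singleton j).prod (violCells_finite (c j))))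
    rintro ⟨j, w⟩ h
    exact Set.mem_biUnion (Set.mem_univ j) ⟨rfl, h⟩
  · rintro X ⟨⟨j, w⟩, -, rfl⟩; exact isRay_raySetC _
  · ext y
    simp only [Set.mem_sUnion, Set.mem_image, Set.mem_compl_iff]
    constructor
    · rintro ⟨X, ⟨⟨j, w⟩, hq, rfl⟩, hy⟩
      rw [mem_pieceC] at hy
      intro hmem
      exact violCells_not_cellMem hq hy.2 (hmem j)
    · intro hy
      have hne : {i : Fin k | ¬ cellMem (c i) (y i)}.Nonempty := by
        by_contra h
        rw [Set.not_nonempty_iff_eq_empty, Set.eq_empty_iff_forall_notMem] at h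
        simp only [Set.mem_setOf_eq, not_not] at h
        exact hy h
      obtain ⟨j, hj, hmin⟩ := Set.exists_min_image _ id
        (Set.toFinite _) hne
      obtain ⟨w, hw, hwy⟩ := exists_violCell hj
      refine ⟨_, ⟨⟨j, w⟩, hw, rfl⟩, ?_⟩
      rw [mem_pieceC]
      refine ⟨fun i hi => ?_, hwy⟩
      by_contra hcon
      exact absurd (hmin i hcon) (by simpa using hi)
  · rintro X ⟨⟨j, w⟩, hq, rfl⟩ Y ⟨⟨j', w'⟩, hq', rfl⟩ hne
    rw [Set.disjoint_left]
    intro y hy hy'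
    rw [mem_pieceC] at hy hy'
    rcases lt_trichotomy j j' with h | h | h
    · exact violCells_not_cellMem hq hy.2 (hy'.1 j h)
    · subst h
      rcases eq_or_ne w w' with rfl | hww
      · exact hne rfl
      · exact violCells_disjoint hq hq' hww hy.2 hy'.2
    · exact violCells_not_cellMem hq' hy'.2 (hy.1 j' h)


lemma goodK_compl_ray {k} {Y : Set (Fin k → ℕ)} (h : IsRay k Y) : GoodK k Yᶜ := by
  rw [isRay_iff] at h
  obtain ⟨x, T, rfl⟩ := h
  rw [stdRay_eq_raySetC]
  exact goodK_compl_raySetC _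

def Good (k n : ℕ) (A : Set (HPt k n)) : Prop := ∃ P, IsRayPartitionOf k n P A

-- ray intersection at HPt level
lemma isRayIn_inter {k n} {X X' : Set (HPt k n)} (h : IsRayIn k n X) (h' : IsRayIn k n X')
    (hne : (X ∩ X').Nonempty) : IsRayIn k n (X ∩ X') := by
  obtain ⟨Y, i, hY, rfl⟩ := h
  obtain ⟨Y', i', hY', rfl⟩ := h'
  obtain ⟨p, ⟨hp1, hp2⟩, ⟨hp1', hp2'⟩⟩ := hne
  subst hp2
  rw [isRay_iff] at hY hY'
  obtain ⟨x, T, rfl⟩ := hY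
  obtain ⟨x', T', rfl⟩ := hY'
  have hint := stdRay_inter x x' T T' p.1 ⟨hp1, hp1'⟩
  refine ⟨stdRay (fun j => max (x j) (x' j)) (T ∩ T'), p.2, isRay_stdRay _ _, ?_⟩
  ext q
  simp only [Set.mem_inter_iff, Set.mem_setOf_eq, ← hp2']
  constructor
  · rintro ⟨⟨a, b⟩, c, d⟩
    have : q.1 ∈ stdRay x T ∩ stdRay x' T' := ⟨a, c⟩
    rw [hint] at this
    exact ⟨this, b⟩
  · rintro ⟨hq, h2⟩
    rw [← hint] at hq
    exact ⟨⟨hq.1, h2⟩, hq.2, h2⟩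

lemma good_empty (k n : ℕ) : Good k n ∅ :=
  ⟨∅, Set.finite_empty, by simp, by simp, by simp⟩

lemma good_ray {k n} {X : Set (HPt k n)} (h : IsRayIn k n X) : Good k n X :=
  ⟨{X}, Set.finite_singleton X, by simpa, by simp, by simp⟩

lemma good_univ (k n : ℕ) : Good k n Set.univ := by
  refine ⟨Set.range (fun i : Fin n => {p : HPt k n | p.2 = i}), Set.finite_range _, ?_, ?_, ?_⟩
  · rintro X ⟨i, rfl⟩
    refine ⟨stdRay (fun _ => 0) Finset.univ, i, isRay_stdRay _ _, ?_⟩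
    ext p
    simp [stdRay]
  · ext p
    simp only [Set.mem_sUnion, Set.mem_range, Set.mem_univ, iff_true]
    exact ⟨_, ⟨p.2, rfl⟩, rfl⟩
  · rintro X ⟨i, rfl⟩ Y ⟨i', rfl⟩ hne
    rw [Set.disjoint_left]
    rintro p (rfl : p.2 = i) (rfl : p.2 = i')
    exact hne rfl

lemma good_inter {k n} {A B : Set (HPt k n)} (hA : Good k n A) (hB : Good k n B) :
    Good k n (A ∩ B) := by
  obtain ⟨P, hPf, hPr, hPu, hPd⟩ := hA
  obtain ⟨Q, hQf, hQr, hQu, hQd⟩ := hB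
  refine ⟨{Z | ∃ X ∈ P, ∃ Y ∈ Q, Z = X ∩ Y ∧ Z.Nonempty}, ?_, ?_, ?_, ?_⟩
  · apply Set.Finite.subset (Set.Finite.image2 (· ∩ ·) hPf hQf)
    rintro Z ⟨X, hX, Y, hY, rfl, -⟩
    exact Set.mem_image2_of_mem hX hY
  · rintro Z ⟨X, hX, Y, hY, rfl, hne⟩
    exact isRayIn_inter (hPr X hX) (hQr Y hY) hne
  · ext p
    simp only [Set.mem_sUnion, Set.mem_setOf_eq, Set.mem_inter_iff]
    constructor
    · rintro ⟨Z, ⟨X, hX, Y, hY, rfl, -⟩, hp1, hp2⟩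
      rw [← hPu, ← hQu]
      exact ⟨⟨X, hX, hp1⟩, ⟨Y, hY, hp2⟩⟩
    · rintro ⟨hpA, hpB⟩
      rw [← hPu] at hpA; rw [← hQu] at hpB
      obtain ⟨X, hX, hpX⟩ := hpA
      obtain ⟨Y, hY, hpY⟩ := hpB
      exact ⟨X ∩ Y, ⟨X, hX, Y, hY, rfl, ⟨p, hpX, hpY⟩⟩, hpX, hpY⟩
  · rintro Z ⟨X, hX, Y, hY, rfl, -⟩ Z' ⟨X', hX', Y', hY', rfl, -⟩ hne
    rcases eq_or_ne X X' with rfl | hXX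
    · rcases eq_or_ne Y Y' with rfl | hYY
      · exact absurd rfl hne
      · exact Set.disjoint_of_subset Set.inter_subset_right Set.inter_subset_right
          (hQd Y hY Y' hY' hYY)
    · exact Set.disjoint_of_subset Set.inter_subset_left Set.inter_subset_left
        (hPd X hX X' hX' hXX)

-- lift the K-level complement to HPt level
lemma good_compl_rayIn {k n} {X : Set (HPt k n)} (h : IsRayIn k n X) : Good k n Xᶜ := by
  obtain ⟨Y, i, hY, rfl⟩ := h
  obtain ⟨PK, hKf, hKr, hKu, hKd⟩ := goodK_compl_ray hY
  refine ⟨((fun Z => {p : HPt k n | p.1 ∈ Z ∧ p.2 = i}) '' PK) ∪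
    {X | ∃ i' : Fin n, i' ≠ i ∧ X = {p : HPt k n | p.2 = i'}}, ?_, ?_, ?_, ?_⟩
  · apply Set.Finite.union (hKf.image _)
    apply Set.Finite.subset (Set.finite_range (fun i' : Fin n => {p : HPt k n | p.2 = i'}))
    rintro X ⟨i', -, rfl⟩
    exact ⟨i', rfl⟩
  · rintro X (⟨Z, hZ, rfl⟩ | ⟨i', -, rfl⟩)
    · exact ⟨Z, i, hKr Z hZ, rfl⟩
    · refine ⟨stdRay (fun _ => 0) Finset.univ, i', isRay_stdRay _ _, ?_⟩
      ext p; simp [stdRay]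
  · ext p
    simp only [Set.mem_sUnion, Set.mem_union, Set.mem_image, Set.mem_setOf_eq,
      Set.mem_compl_iff]
    constructor
    · rintro ⟨X, ⟨Z, hZ, rfl⟩ | ⟨i', hi', rfl⟩, hp⟩
      · rintro ⟨hp1, rfl⟩
        have : p.1 ∈ ⋃₀ PK := ⟨Z, hZ, hp.1⟩
        rw [hKu] at this
        exact this hp1
      · rintro ⟨-, h⟩
        exact hi' ((hp : p.2 = i').symm.trans h)
    · intro hp
      by_cases hpi : p.2 = i
      · have hp1 : p.1 ∈ Yᶜ := fun hc => hp ⟨hc, hpi⟩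
        rw [← hKu] at hp1
        obtain ⟨Z, hZ, hpZ⟩ := hp1
        exact ⟨_, Or.inl ⟨Z, hZ, rfl⟩, hpZ, hpi⟩
      · exact ⟨_, Or.inr ⟨p.2, hpi, rfl⟩, rfl⟩
  · rintro X (⟨Z, hZ, rfl⟩ | ⟨i', hi', rfl⟩) X' (⟨Z', hZ', rfl⟩ | ⟨i'', hi'', rfl⟩) hne <;>
      rw [Set.disjoint_left]
    · rintro p ⟨hp1, -⟩ ⟨hp1', -⟩
      rcases eq_or_ne Z Z' with rfl | hZZ
      · exact hne rfl
      · exact Set.disjoint_left.mp (hKd Z hZ Z' hZ' hZZ) hp1 hp1'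
    · rintro p ⟨-, h2⟩ h2'
      exact hi'' ((h2' : p.2 = i'').symm.trans h2)
    · rintro p h2 ⟨-, h2'⟩
      exact hi' ((h2 : p.2 = i').symm.trans h2')
    · intro p h2 h2'
      exact hne (by rw [show i' = i'' from (h2 : p.2 = i').symm.trans h2'])

lemma good_compl {k n} {A : Set (HPt k n)} (hA : Good k n A) : Good k n Aᶜ := by
  obtain ⟨P, hPf, hPr, hPu, -⟩ := hA
  subst hPu
  refine Set.Finite.induction_on
    (motive := fun P _ => (∀ X ∈ P, IsRayIn k n X) → Good k n (⋃₀ P)ᶜ) _ hPf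
    (fun _ => by simpa using good_univ k n) ?_ hPr
  intro X Q hX hQf ih hr
  rw [Set.sUnion_insert, Set.compl_union]
  exact good_inter (good_compl_rayIn (hr _ (Set.mem_insert _ _)))
    (ih fun Z hZ => hr Z (Set.mem_insert_of_mem _ hZ))



lemma good_union {k n} {A B : Set (HPt k n)} (hA : Good k n A) (hB : Good k n B) :
    Good k n (A ∪ B) := by
  have := good_compl (good_inter (good_compl hA) (good_compl hB))
  rwa [Set.compl_inter, compl_compl, compl_compl] at this

lemma isRayIn_image {k m n} {f : HPt k m → HPt k n} {X : Set (HPt k m)}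
    (hX : IsRayIn k m X) (ht : IsTranslationOn k m n f X) : IsRayIn k n (f '' X) := by
  obtain ⟨Y, i, hY, rfl⟩ := hX
  rw [isRay_iff] at hY
  obtain ⟨x, T, rfl⟩ := hY
  obtain ⟨d, d₀, hd⟩ := ht
  set p₀ : HPt k m := (x, i) with hp₀
  have hp₀mem : p₀ ∈ {p : HPt k m | p.1 ∈ stdRay x T ∧ p.2 = i} := ⟨base_mem_stdRay x T, rfl⟩
  obtain ⟨hd₀1, hd₀2⟩ := hd p₀ hp₀mem
  set x' : Fin k → ℕ := (f p₀).1 with hx'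
  set i' : Fin n := (f p₀).2 with hi'
  refine ⟨stdRay x' T, i', isRay_stdRay _ _, ?_⟩
  ext q
  simp only [Set.mem_image, Set.mem_setOf_eq]
  constructor
  · rintro ⟨p, ⟨hp1, hp2⟩, rfl⟩
    obtain ⟨h1, h2⟩ := hd p ⟨hp1, hp2⟩
    constructor
    · intro j
      have hj1 := (hp1 j).1
      have hj2 := (hp1 j).2
      have e1 := h1 j
      have e0 := hd₀1 j
      constructor
      · intro hjT
        have : (x' j : ℤ) ≤ ((f p).1 j : ℤ) := by
          rw [e1, e0]
          have := hj1 hjT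
          simp only [hp₀]
          omega
        exact_mod_cast this
      · intro hjT
        have : ((f p).1 j : ℤ) = (x' j : ℤ) := by
          rw [e1, e0]
          have := hj2 hjT
          simp only [hp₀]
          omega
        exact_mod_cast this
    · have : ((f p).2 : ℤ) = (i' : ℤ) := by rw [h2, hd₀2, hp2]
      exact Fin.ext (by exact_mod_cast this)
  · rintro ⟨hq1, hq2⟩
    classical
    have hx'j : ∀ j, (x' j : ℤ) = (x j : ℤ) + d j := fun j => by
      have := hd₀1 j; simpa [hp₀] using this
    have hi'eq : (i' : ℤ) = (i : ℤ) + d₀ := by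
      have := hd₀2; simpa [hp₀] using this
    set z : Fin k → ℕ := fun j => if j ∈ T then x j + (q.1 j - x' j) else x j with hz
    have hzmem : ((z, i) : HPt k m) ∈ {p : HPt k m | p.1 ∈ stdRay x T ∧ p.2 = i} := by
      refine ⟨fun j => ⟨fun hjT => ?_, fun hjT => ?_⟩, rfl⟩
      · simp [hz, hjT]
      · simp [hz, hjT]
    refine ⟨(z, i), hzmem, ?_⟩
    obtain ⟨h1, h2⟩ := hd (z, i) hzmem
    have hfst : ∀ j, (f (z, i)).1 j = q.1 j := by
      intro j
      have e1 : ((f (z, i)).1 j : ℤ) = (z j : ℤ) + d j := h1 j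
      have e0 := hx'j j
      by_cases hjT : j ∈ T
      · have hle : x' j ≤ q.1 j := (hq1 j).1 hjT
        have hzj : z j = x j + (q.1 j - x' j) := by simp [hz, hjT]
        have : ((f (z, i)).1 j : ℤ) = (q.1 j : ℤ) := by
          rw [e1, hzj]; omega
        exact_mod_cast this
      · have heq : q.1 j = x' j := (hq1 j).2 hjT
        have hzj : z j = x j := by simp [hz, hjT]
        have : ((f (z, i)).1 j : ℤ) = (q.1 j : ℤ) := by
          rw [e1, hzj]; omega
        exact_mod_cast this
    have hsnd : (f (z, i)).2 = q.2 := by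
      apply Fin.ext
      have h2' : ((f (z, i)).2 : ℤ) = (i : ℤ) + d₀ := h2
      have : ((f (z, i)).2 : ℤ) = (q.2 : ℤ) := by
        rw [h2', hq2, hi'eq]
      exact_mod_cast this
    exact Prod.ext (funext hfst) hsnd


lemma good_range {k m n} (f : HPt k m → HPt k n) (P : Set (Set (HPt k m)))
    (hP : IsRayPartitionOf k m P Set.univ) (ht : ∀ X ∈ P, IsTranslationOn k m n f X) :
    Good k n (Set.range f) := by
  obtain ⟨hPf, hPr, hPu, -⟩ := hP
  have hrange : Set.range f = ⋃ X ∈ P, f '' X := by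
    rw [← Set.image_univ, ← hPu, Set.sUnion_eq_biUnion, Set.image_iUnion₂]
  rw [hrange]
  have key : ∀ X ∈ P, Good k n (f '' X) := fun X hX =>
    good_ray (isRayIn_image (hPr X hX) (ht X hX))
  clear hrange hPu ht hPr
  refine Set.Finite.induction_on
    (motive := fun P _ => (∀ X ∈ P, Good k n (f '' X)) → Good k n (⋃ X ∈ P, f '' X)) _ hPf
    (fun _ => by simpa using good_empty k n) ?_ key
  intro X Q hX hQf ih hr
  rw [Set.biUnion_insert]
  exact good_union (hr _ (Set.mem_insert _ _)) (ih fun Z hZ => hr Z (Set.mem_insert_of_mem _ hZ))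


/-- If `m ≤ n` and `f : ℕ^k × [m] → ℕ^k × [n]` is a ray-translation injection, then the
complement of its image admits a (possibly empty) finite partition into rays. -/
theorem complement_partition (k m n : ℕ) (hk : 1 ≤ k) (hmn : m ≤ n)
    (f : HPt k m → HPt k n) (hf : IsRayTranslationInj k m n f) :
    ∃ P, IsRayPartitionOf k n P (Set.range f)ᶜ := by
  obtain ⟨hinj, P, hP, ht⟩ := hf
  exact good_compl (good_range f P hP ht)

end RayProof
end
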